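/- Let 4 ≤ p ≤ 6 and let δ₁, δ₂ > 0 satisfy 1 − 4/p ≤ δ₁ ≤ 1/2 + 3/p and 1 − 4/p ≤ δ₂ ≤ 1. Let τ be a sequence in T(δ₁, δ₂) such that τ_n ≤ n − 1/2 + 3/p for all n ≥ 1. Then E_p(τ) = Σ_{k=0}^∞ A_p(τ; k). -/

import Mathlib

open MeasureTheory Real Set

/-- The kernel `K_p(τ; x)`. -/
noncomputable def Kp (p : ℝ) (τ : ℕ → ℝ) (x : ℝ) : ℝ :=
  ∑' n : ℕ, (Set.Ioo (τ n) (τ (n + 1))).indicator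
    (fun y => Real.sin (p / 2 * π * (y - n)) / (π * y)) x

/-- The quantity `E_p(τ)`. -/
noncomputable def Ep (p : ℝ) (τ : ℕ → ℝ) : ℝ :=
  ∫ x in Set.Ioi (0 : ℝ), (max 0 (Kp p τ x)) ^ 2

/-- The set of sequences `T(δ₁, δ₂)`. -/
def Tset (δ₁ δ₂ : ℝ) : Set (ℕ → ℝ) :=
  {τ | τ 0 = 0 ∧ StrictMono τ ∧ δ₁ ≤ τ 1 ∧ ∀ n, 1 ≤ n → δ₂ ≤ τ (n + 1) - τ n}

/-- The supremum `ℰ_p(δ₁, δ₂) = sup_{τ ∈ T(δ₁,δ₂)} E_p(τ)`. -/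
noncomputable def Esup (p δ₁ δ₂ : ℝ) : ℝ := sSup (Ep p '' Tset δ₁ δ₂)

/-- The contribution `A_p(τ; k)` of the `k`-th ray (range `4 ≤ p ≤ 6`, with
`ϱ = 1 - 4/p` and `I_{k,j} = (k - 1 + 4/p + jϱ, k - 1 + 4/p + jϱ + 2/p)`);
the term `j = 0` is omitted when `k = 0`. -/
noncomputable def Ap (p : ℝ) (τ : ℕ → ℝ) (k : ℕ) : ℝ :=
  ∑' j : ℕ,
    if k = 0 ∧ j = 0 then 0 else
      ∫ x in ((k : ℝ) - 1 + 4 / p + j * (1 - 4 / p))..((k : ℝ) - 1 + 4 / p + j * (1 - 4 / p) + 2 / p),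
        (Set.Ioo (τ (k + j - 1)) (τ (k + j))).indicator
          (fun y => Real.sin (p / 2 * π * (y - ((k : ℝ) - 1 + j))) ^ 2 / (π ^ 2 * y ^ 2)) x

/- ### Auxiliary definitions and lemmas -/

open scoped ENNReal NNReal

noncomputable def auxA (p : ℝ) (k j : ℕ) : ℝ := (k : ℝ) - 1 + 4 / p + j * (1 - 4 / p)

noncomputable def auxS (p : ℝ) (τ : ℕ → ℝ) (k j : ℕ) : Set ℝ :=
  Set.Ioo (auxA p k j) (auxA p k j + 2 / p) ∩ Set.Ioo (τ (k + j - 1)) (τ (k + j))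

noncomputable def auxh (p : ℝ) (τ : ℕ → ℝ) (i : ℕ × ℕ) (x : ℝ) : ℝ :=
  if i.1 = 0 ∧ i.2 = 0 then 0 else
    (auxS p τ i.1 i.2).indicator
      (fun y => Real.sin (p / 2 * π * (y - ((i.1 : ℝ) - 1 + i.2))) ^ 2 / (π ^ 2 * y ^ 2)) x

lemma aux_sin_per (t : ℝ) (m : ℤ) : Real.sin (π * (t + 2 * m)) = Real.sin (π * t) := by
  have : π * (t + 2 * m) = π * t + m * (2 * π) := by ring
  rw [this, Real.sin_add_int_mul_two_pi]

lemma aux_core1 {t : ℝ} (h0 : 0 < t) (h1 : t < 1) : 0 < Real.sin (π * t) :=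
  Real.sin_pos_of_pos_of_lt_pi (by positivity) (by nlinarith [Real.pi_pos])

lemma aux_core2 {t : ℝ} (h0 : 0 ≤ t) (h2 : t < 2) (hs : 0 < Real.sin (π * t)) :
    0 < t ∧ t < 1 := by
  constructor
  · rcases eq_or_lt_of_le h0 with h | h
    · exfalso; rw [← h] at hs; simp at hs
    · exact h
  · by_contra hge
    push_neg at hge
    have hsub : Real.sin (π * (t - 1) + π) = -Real.sin (π * (t - 1)) := Real.sin_add_pi _
    have hnn : 0 ≤ Real.sin (π * (t - 1)) :=
      Real.sin_nonneg_of_nonneg_of_le_pi (by nlinarith [Real.pi_pos]) (by nlinarith [Real.pi_pos])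
    have : Real.sin (π * t) ≤ 0 := by
      rw [show π * t = π * (t - 1) + π by ring, hsub]
      linarith
    linarith

lemma aux_sin_pos_mem {p x c : ℝ} (hp : 0 < p) {m : ℤ} (h1 : c + 4 * m / p < x)
    (h2 : x < c + 4 * m / p + 2 / p) :
    0 < Real.sin (p / 2 * π * (x - c)) ∧
      Real.sin (p / 2 * π * (x - c)) ≤ p / 2 * π * (x - (c + 4 * m / p)) := by
  have ht0 : 0 < p / 2 * (x - c) - 2 * m := by
    have h1' : 4 * (m : ℝ) / p < x - c := by linarith
    rw [div_lt_iff₀ hp] at h1'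
    nlinarith
  have ht1 : p / 2 * (x - c) - 2 * m < 1 := by
    have h2' : x - c < (4 * (m : ℝ) + 2) / p := by
      rw [show (4 * (m:ℝ) + 2) / p = 4 * m / p + 2 / p by ring]
      linarith
    rw [lt_div_iff₀ hp] at h2'
    nlinarith
  have hsin : Real.sin (p / 2 * π * (x - c)) = Real.sin (π * (p / 2 * (x - c) - 2 * m)) := by
    rw [show p / 2 * π * (x - c) = π * ((p / 2 * (x - c) - 2 * m) + 2 * m) by ring, aux_sin_per]
  constructor
  · rw [hsin]; exact aux_core1 ht0 ht1
  · rw [hsin]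
    have hle : Real.sin (π * (p / 2 * (x - c) - 2 * m)) ≤ π * (p / 2 * (x - c) - 2 * m) :=
      Real.sin_le (by positivity)
    have heq : π * (p / 2 * (x - c) - 2 * m) = p / 2 * π * (x - (c + 4 * m / p)) := by
      field_simp
      ring
    linarith [heq ▸ hle]

lemma aux_exists_m {p x c : ℝ} (hp : 0 < p) (hs : 0 < Real.sin (p / 2 * π * (x - c))) :
    ∃ m : ℤ, c + 4 * m / p < x ∧ x < c + 4 * m / p + 2 / p := by
  refine ⟨⌊p / 2 * (x - c) / 2⌋, ?_⟩
  have hfl : 2 * (⌊p / 2 * (x - c) / 2⌋ : ℝ) ≤ p / 2 * (x - c) := by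
    have := Int.floor_le (p / 2 * (x - c) / 2); linarith
  have hfu : p / 2 * (x - c) < 2 * (⌊p / 2 * (x - c) / 2⌋ : ℝ) + 2 := by
    have := Int.lt_floor_add_one (p / 2 * (x - c) / 2); linarith
  have hsin : Real.sin (p / 2 * π * (x - c)) =
      Real.sin (π * (p / 2 * (x - c) - 2 * ⌊p / 2 * (x - c) / 2⌋)) := by
    rw [show p / 2 * π * (x - c)
        = π * ((p / 2 * (x - c) - 2 * ⌊p / 2 * (x - c) / 2⌋) + 2 * ⌊p / 2 * (x - c) / 2⌋) by
      push_cast; ring, aux_sin_per]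
  rw [hsin] at hs
  obtain ⟨ht0, ht1⟩ := aux_core2 (by linarith) (by linarith) hs
  constructor
  · have : 4 * (⌊p / 2 * (x - c) / 2⌋ : ℝ) / p < x - c := by
      rw [div_lt_iff₀ hp]; nlinarith
    linarith
  · have : x - c < 4 * (⌊p / 2 * (x - c) / 2⌋ : ℝ) / p + 2 / p := by
      rw [show 4 * (⌊p / 2 * (x - c) / 2⌋ : ℝ) / p + 2 / p
          = (4 * (⌊p / 2 * (x - c) / 2⌋ : ℝ) + 2) / p by ring, lt_div_iff₀ hp]
      nlinarith
    linarith

lemma auxA_eq (p : ℝ) (k j : ℕ) :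
    auxA p k j = ((k : ℝ) - 1 + j) + 4 * ((1 - (j : ℤ) : ℤ) : ℝ) / p := by
  unfold auxA
  push_cast
  ring

lemma auxA_nonneg {p : ℝ} (hp4 : 4 ≤ p) {k j : ℕ} (h : ¬(k = 0 ∧ j = 0)) :
    0 ≤ auxA p k j := by
  have hp0 : (0:ℝ) < p := by linarith
  have h4p : 4 / p ≤ 1 := by rw [div_le_one hp0]; linarith
  have h4p0 : (0:ℝ) < 4 / p := by positivity
  unfold auxA
  rcases Nat.eq_zero_or_pos k with hk | hk
  · subst hk
    have hj : 1 ≤ j := by omega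
    have hj' : (1:ℝ) ≤ j := by exact_mod_cast hj
    push_cast
    nlinarith
  · have hk' : (1:ℝ) ≤ k := by exact_mod_cast hk
    have hj' : (0:ℝ) ≤ j := Nat.cast_nonneg j
    nlinarith

lemma auxh_nonneg (p : ℝ) (τ : ℕ → ℝ) (i : ℕ × ℕ) (x : ℝ) : 0 ≤ auxh p τ i x := by
  unfold auxh
  split_ifs
  · exact le_refl 0
  · exact Set.indicator_nonneg (fun y _ => by positivity) x

lemma auxh_meas (p : ℝ) (τ : ℕ → ℝ) (i : ℕ × ℕ) : Measurable (auxh p τ i) := by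
  unfold auxh
  split_ifs
  · exact measurable_const
  · exact Measurable.indicator
      (((Real.measurable_sin.comp ((measurable_id.sub_const _).const_mul _)).pow_const 2).div
        ((measurable_id.pow_const 2).const_mul _))
      (measurableSet_Ioo.inter measurableSet_Ioo)

lemma auxh_ne {p : ℝ} {τ : ℕ → ℝ} {i : ℕ × ℕ} {x : ℝ} (h : auxh p τ i x ≠ 0) :
    ¬(i.1 = 0 ∧ i.2 = 0) ∧ x ∈ auxS p τ i.1 i.2 := by
  unfold auxh at h
  split_ifs at h with hc
  · exact absurd rfl h
  · refine ⟨hc, ?_⟩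
    by_contra hxm
    rw [Set.indicator_of_notMem hxm] at h
    exact h rfl

lemma aux_level_unique {τ : ℕ → ℝ} (hmono : StrictMono τ) {x : ℝ} {n n' : ℕ}
    (hn : x ∈ Set.Ioo (τ n) (τ (n + 1))) (hn' : x ∈ Set.Ioo (τ n') (τ (n' + 1))) : n = n' := by
  by_contra hne
  rcases Nat.lt_or_ge n n' with hlt | hge
  · have : τ (n + 1) ≤ τ n' := hmono.monotone (by omega)
    have := hn.2; have := hn'.1; linarith
  · have hlt : n' < n := by omega
    have : τ (n' + 1) ≤ τ n := hmono.monotone (by omega)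
    have := hn.1; have := hn'.2; linarith

lemma auxh_val {p : ℝ} (hp4 : 4 ≤ p) (τ : ℕ → ℝ) {k j : ℕ} (hne : ¬(k = 0 ∧ j = 0)) {x : ℝ}
    (hmem : x ∈ auxS p τ k j) :
    auxh p τ (k, j) x = Real.sin (p / 2 * π * (x - ((k : ℝ) - 1 + j))) ^ 2 / (π ^ 2 * x ^ 2) ∧
    0 < Real.sin (p / 2 * π * (x - ((k : ℝ) - 1 + j))) := by
  have hp0 : (0:ℝ) < p := by linarith
  refine ⟨?_, ?_⟩
  · unfold auxh
    rw [if_neg hne, Set.indicator_of_mem hmem]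
  · have h1 := hmem.1.1
    have h2 := hmem.1.2
    rw [auxA_eq p k j] at h1 h2
    exact (aux_sin_pos_mem hp0 h1 h2).1

lemma auxh_le {p : ℝ} (hp4 : 4 ≤ p) (hp6 : p ≤ 6) (τ : ℕ → ℝ) (i : ℕ × ℕ) {x : ℝ} (hx : 0 < x) :
    auxh p τ i x ≤ min 9 (1 / (π ^ 2 * x ^ 2)) := by
  have hπ := Real.pi_pos
  have hmin : (0:ℝ) ≤ min 9 (1 / (π ^ 2 * x ^ 2)) := le_min (by norm_num) (by positivity)
  unfold auxh
  split_ifs with hc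
  · exact hmin
  · by_cases hmem : x ∈ auxS p τ i.1 i.2
    · rw [Set.indicator_of_mem hmem]
      have hp0 : (0:ℝ) < p := by linarith
      have h1 := hmem.1.1
      have h2 := hmem.1.2
      rw [auxA_eq p i.1 i.2] at h1 h2
      obtain ⟨hs0, hsle⟩ := aux_sin_pos_mem hp0 h1 h2
      have hA0 : 0 ≤ auxA p i.1 i.2 := auxA_nonneg hp4 hc
      rw [auxA_eq p i.1 i.2] at hA0
      have hsle' : Real.sin (p / 2 * π * (x - ((i.1:ℝ) - 1 + i.2))) ≤ p / 2 * π * x := by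
        have : p / 2 * π * (x - (((i.1:ℝ) - 1 + i.2) + 4 * ((1 - (i.2:ℤ) : ℤ) : ℝ) / p))
            ≤ p / 2 * π * x := by
          apply mul_le_mul_of_nonneg_left _ (by positivity)
          linarith
        linarith
      have hs2 : Real.sin (p / 2 * π * (x - ((i.1:ℝ) - 1 + i.2))) ^ 2 ≤ (p / 2 * π * x) ^ 2 := by
        nlinarith
      apply le_min
      · rw [div_le_iff₀ (by positivity)]
        have hq : (p / 2 * π * x) ^ 2 ≤ 9 * (π ^ 2 * x ^ 2) := by
          nlinarith [sq_nonneg (π * x),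
            mul_nonneg (mul_nonneg (sub_nonneg.2 hp6) (by linarith : (0:ℝ) ≤ 6 + p))
              (sq_nonneg (π * x))]
        linarith
      · gcongr
        exact Real.sin_sq_le_one _
    · rw [Set.indicator_of_notMem hmem]
      exact hmin

lemma aux_excl {p : ℝ} {τ : ℕ → ℝ} (hmono : StrictMono τ)
    {x : ℝ} {i i' : ℕ × ℕ} (hp4 : 4 ≤ p) (h : auxh p τ i x ≠ 0) (h' : auxh p τ i' x ≠ 0) :
    i = i' := by
  have hp0 : (0:ℝ) < p := by linarith
  obtain ⟨hne1, hS1⟩ := auxh_ne h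
  obtain ⟨hne2, hS2⟩ := auxh_ne h'
  have e1 : i.1 + i.2 - 1 + 1 = i.1 + i.2 := by omega
  have e2 : i'.1 + i'.2 - 1 + 1 = i'.1 + i'.2 := by omega
  have hIoo1 : x ∈ Set.Ioo (τ (i.1 + i.2 - 1)) (τ (i.1 + i.2 - 1 + 1)) := by
    rw [e1]; exact hS1.2
  have hIoo2 : x ∈ Set.Ioo (τ (i'.1 + i'.2 - 1)) (τ (i'.1 + i'.2 - 1 + 1)) := by
    rw [e2]; exact hS2.2
  have hnn := aux_level_unique hmono hIoo1 hIoo2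
  have hsum : i.1 + i.2 = i'.1 + i'.2 := by omega
  have hsR : (i.1 : ℝ) + i.2 = (i'.1 : ℝ) + i'.2 := by exact_mod_cast hsum
  have hdiff : auxA p i.1 i.2 - auxA p i'.1 i'.2 = ((i'.2:ℝ) - i.2) * (4 / p) := by
    unfold auxA; linear_combination hsR
  have h42 : (4:ℝ)/p = 2/p + 2/p := by ring
  have h2p : (0:ℝ) < 2/p := by positivity
  have hj : i.2 = i'.2 := by
    by_contra hjne
    rcases Nat.lt_or_ge i.2 i'.2 with hlt | hge
    · have hle : i.2 + 1 ≤ i'.2 := hlt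
      have hd1 : (1:ℝ) ≤ (i'.2:ℝ) - i.2 := by
        have := (Nat.cast_le (α := ℝ)).2 hle
        push_cast at this; linarith
      have h4 : 4/p ≤ ((i'.2:ℝ) - i.2) * (4/p) := le_mul_of_one_le_left (by positivity) hd1
      have hx1 := hS1.1.1
      have hx2 := hS2.1.2
      linarith
    · have hlt : i'.2 < i.2 := by omega
      have hle : i'.2 + 1 ≤ i.2 := hlt
      have hd1 : ((i'.2:ℝ) - i.2) ≤ -1 := by
        have := (Nat.cast_le (α := ℝ)).2 hle
        push_cast at this; linarith
      have h4 : ((i'.2:ℝ) - i.2) * (4/p) ≤ -(4/p) := by nlinarith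
      have hx1 := hS1.1.2
      have hx2 := hS2.1.1
      linarith
  have hk : i.1 = i'.1 := by omega
  exact Prod.ext hk hj

theorem stmt17 (p δ₁ δ₂ : ℝ) (hp4 : 4 ≤ p) (hp6 : p ≤ 6)
    (hδ1pos : 0 < δ₁) (hδ2pos : 0 < δ₂)
    (h1 : 1 - 4 / p ≤ δ₁) (h1' : δ₁ ≤ 1 / 2 + 3 / p)
    (h2 : 1 - 4 / p ≤ δ₂) (h2' : δ₂ ≤ 1)
    (τ : ℕ → ℝ) (hτ : τ ∈ Tset δ₁ δ₂)
    (hτn : ∀ n : ℕ, 1 ≤ n → τ n ≤ (n : ℝ) - 1 / 2 + 3 / p) :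
    Ep p τ = ∑' k : ℕ, Ap p τ k := by
  obtain ⟨hτ0, hmono, hd1, hd2⟩ := hτ
  have hπ := Real.pi_pos
  have hp0 : (0:ℝ) < p := by linarith
  have hρ : (0:ℝ) ≤ 1 - 4 / p := by
    have : 4 / p ≤ 1 := by rw [div_le_one hp0]; linarith
    linarith
  -- lower bound for τ
  have hlow : ∀ n : ℕ, (n : ℝ) * (1 - 4 / p) ≤ τ n := by
    intro n
    induction n with
    | zero => simp [hτ0]
    | succ n ih =>
      rcases Nat.eq_zero_or_pos n with hn | hn
      · subst hn
        push_cast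
        linarith
      · have hgap := hd2 n hn
        push_cast
        push_cast at ih
        linarith
  have hτnonneg : ∀ n, 0 ≤ τ n := fun n =>
    le_trans (mul_nonneg (Nat.cast_nonneg n) hρ) (hlow n)
  -- Kp on an interval
  have hKp_mem : ∀ {x : ℝ} {n : ℕ}, x ∈ Set.Ioo (τ n) (τ (n + 1)) →
      Kp p τ x = Real.sin (p / 2 * π * (x - n)) / (π * x) := by
    intro x n hn
    unfold Kp
    rw [tsum_eq_single n ?_]
    · rw [Set.indicator_of_mem hn]
    · intro n' hne
      apply Set.indicator_of_notMem
      intro hmem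
      exact hne (aux_level_unique hmono hmem hn)
  -- Kp off the intervals
  have hKp_zero : ∀ {x : ℝ}, (∀ n : ℕ, x ∉ Set.Ioo (τ n) (τ (n + 1))) → Kp p τ x = 0 := by
    intro x hx
    unfold Kp
    have : ∀ n : ℕ, (Set.Ioo (τ n) (τ (n + 1))).indicator
        (fun y => Real.sin (p / 2 * π * (y - n)) / (π * y)) x = 0 :=
      fun n => Set.indicator_of_notMem (hx n) _
    rw [tsum_congr this]
    exact tsum_zero
  -- the pointwise identity
  have key : Set.EqOn (fun x => (max 0 (Kp p τ x)) ^ 2)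
      (fun x => ∑' i : ℕ × ℕ, auxh p τ i x) (Set.Ioi 0) := by
    intro x hx
    have hx0 : (0:ℝ) < x := hx
    show (max 0 (Kp p τ x)) ^ 2 = ∑' i : ℕ × ℕ, auxh p τ i x
    by_cases hcase : ∃ n : ℕ, x ∈ Set.Ioo (τ n) (τ (n + 1))
    · obtain ⟨n, hn⟩ := hcase
      have hKx := hKp_mem hn
      by_cases hs : 0 < Real.sin (p / 2 * π * (x - (n:ℝ)))
      · obtain ⟨m, hm1, hm2⟩ := aux_exists_m hp0 hs
        have hupR : τ (n + 1) ≤ (n:ℝ) + 1 - 1 / 2 + 3 / p := by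
          have := hτn (n + 1) (by omega)
          push_cast at this
          linarith
        have hmlt : (m:ℝ) < 2 := by
          have hlt : 4 * (m:ℝ) / p < 1 / 2 + 3 / p := by
            have := hn.2
            linarith
          rw [div_lt_iff₀ hp0] at hlt
          have he : (1 / 2 + 3 / p) * p = p / 2 + 3 := by field_simp
          rw [he] at hlt
          linarith
        have hm_le : m ≤ 1 := by
          have : m < 2 := by exact_mod_cast hmlt
          omega
        have hm_ge : 0 ≤ (n:ℤ) + m := by
          have hineq : (n:ℝ) * (1 - 4 / p) < (n:ℝ) + 4 * m / p + 2 / p := by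
            have := hlow n
            have := hn.1
            linarith
          have h' : (n:ℝ) * (1 - 4 / p) * p < ((n:ℝ) + 4 * m / p + 2 / p) * p :=
            mul_lt_mul_of_pos_right hineq hp0
          have e1 : (n:ℝ) * (1 - 4 / p) * p = n * p - 4 * n := by field_simp
          have e2 : ((n:ℝ) + 4 * m / p + 2 / p) * p = n * p + 4 * m + 2 := by field_simp
          rw [e1, e2] at h'
          have : (-1:ℝ) < (m:ℝ) + n := by linarith
          have : (-1:ℤ) < m + n := by exact_mod_cast this
          omega
        set k : ℕ := ((n:ℤ) + m).toNat with hkdef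
        set j : ℕ := ((1:ℤ) - m).toNat with hjdef
        have hkZ : (k:ℤ) = (n:ℤ) + m := Int.toNat_of_nonneg hm_ge
        have hjZ : (j:ℤ) = 1 - m := Int.toNat_of_nonneg (by omega)
        have hnot : ¬(k = 0 ∧ j = 0) := by
          rintro ⟨hk0, hj0⟩
          rw [hk0] at hkZ
          rw [hj0] at hjZ
          simp at hkZ hjZ
          omega
        have hsum1 : k + j - 1 = n := by omega
        have hsum2 : k + j = n + 1 := by omega
        have hkR : (k:ℝ) = (n:ℝ) + m := by exact_mod_cast hkZ
        have hjR : (j:ℝ) = 1 - m := by exact_mod_cast hjZ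
        have hcR : (k:ℝ) - 1 + j = (n:ℝ) := by rw [hkR, hjR]; ring
        have haR : auxA p k j = (n:ℝ) + 4 * m / p := by
          rw [auxA_eq p k j]
          have h1m : (1:ℤ) - (j:ℤ) = m := by omega
          rw [h1m, hcR]
        have hxS : x ∈ auxS p τ k j := by
          refine ⟨⟨?_, ?_⟩, ?_⟩
          · rw [haR]; exact hm1
          · rw [haR]; exact hm2
          · rw [hsum1, hsum2]; exact hn
        obtain ⟨hval, hspos⟩ := auxh_val hp4 τ hnot hxS
        rw [hcR] at hval hspos
        have hKJne : auxh p τ (k, j) x ≠ 0 := by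
          rw [hval]
          exact ne_of_gt (div_pos (pow_pos hspos 2) (by positivity))
        rw [tsum_eq_single ((k, j) : ℕ × ℕ) ?_]
        · rw [hval, hKx, max_eq_right (le_of_lt (div_pos hs (by positivity))), div_pow, mul_pow]
        · intro i' hne'
          by_contra h0
          exact hne' (aux_excl hmono hp4 h0 hKJne)
      · push_neg at hs
        have hKle : Kp p τ x ≤ 0 := by
          rw [hKx]
          exact div_nonpos_of_nonpos_of_nonneg hs (by positivity)
        have hz : ∀ i : ℕ × ℕ, auxh p τ i x = 0 := by
          intro i
          by_contra h0
          obtain ⟨hne, hS⟩ := auxh_ne h0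
          have e1 : i.1 + i.2 - 1 + 1 = i.1 + i.2 := by omega
          have hIoo : x ∈ Set.Ioo (τ (i.1 + i.2 - 1)) (τ (i.1 + i.2 - 1 + 1)) := by
            rw [e1]; exact hS.2
          have hnn : i.1 + i.2 - 1 = n := aux_level_unique hmono hIoo hn
          have hcR : (i.1:ℝ) - 1 + i.2 = (n:ℝ) := by
            have hsum : i.1 + i.2 = n + 1 := by omega
            have := congrArg (Nat.cast : ℕ → ℝ) hsum
            push_cast at this
            linarith
          have hpos := (auxh_val hp4 τ hne hS).2
          rw [hcR] at hpos
          linarith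
        have hzz : ∑' i : ℕ × ℕ, auxh p τ i x = 0 := by
          rw [tsum_congr hz]
          exact tsum_zero
        rw [hzz, max_eq_left hKle]
        norm_num
    · push_neg at hcase
      have hK0 : Kp p τ x = 0 := hKp_zero hcase
      have hz : ∀ i : ℕ × ℕ, auxh p τ i x = 0 := by
        intro i
        by_contra h0
        obtain ⟨hne, hS⟩ := auxh_ne h0
        have e1 : i.1 + i.2 - 1 + 1 = i.1 + i.2 := by omega
        have hIoo : x ∈ Set.Ioo (τ (i.1 + i.2 - 1)) (τ (i.1 + i.2 - 1 + 1)) := by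
          rw [e1]; exact hS.2
        exact hcase _ hIoo
      have hzz : ∑' i : ℕ × ℕ, auxh p τ i x = 0 := by
        rw [tsum_congr hz]
        exact tsum_zero
      rw [hzz, hK0]
      norm_num
  -- measurability
  have hmeasi : ∀ i : ℕ × ℕ, AEStronglyMeasurable (auxh p τ i)
      (volume.restrict (Set.Ioi (0:ℝ))) :=
    fun i => (auxh_meas p τ i).aestronglyMeasurable
  -- pointwise bound for the ENNReal sums
  have hsum_pt : ∀ x ∈ Set.Ioi (0:ℝ),
      ∑' i : ℕ × ℕ, ENNReal.ofReal (auxh p τ i x)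
        ≤ ENNReal.ofReal (min 9 (1 / (π ^ 2 * x ^ 2))) := by
    intro x hx
    by_cases hex : ∃ i : ℕ × ℕ, auxh p τ i x ≠ 0
    · obtain ⟨i₀, hi₀⟩ := hex
      rw [tsum_eq_single i₀ ?_]
      · exact ENNReal.ofReal_le_ofReal (auxh_le hp4 hp6 τ i₀ hx)
      · intro i' hne
        have hz : auxh p τ i' x = 0 := by
          by_contra h0
          exact hne (aux_excl hmono hp4 h0 hi₀)
        rw [hz]
        exact ENNReal.ofReal_zero
    · push_neg at hex
      have : ∀ i : ℕ × ℕ, ENNReal.ofReal (auxh p τ i x) = 0 := fun i => by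
        rw [hex i]; exact ENNReal.ofReal_zero
      rw [tsum_congr this, tsum_zero]
      exact zero_le
  -- the majorant has finite integral
  have hmaj : ∫⁻ x in Set.Ioi (0:ℝ), ENNReal.ofReal (min 9 (1 / (π ^ 2 * x ^ 2))) < ⊤ := by
    have hsplit : Set.Ioi (0:ℝ) = Set.Ioc (0:ℝ) 1 ∪ Set.Ioi 1 :=
      (Set.Ioc_union_Ioi_eq_Ioi zero_le_one).symm
    have hdisj : Disjoint (Set.Ioc (0:ℝ) 1) (Set.Ioi (1:ℝ)) := by
      rw [Set.disjoint_left]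
      rintro a ⟨_, ha1⟩ ha2
      exact absurd ha2 (not_lt.2 ha1)
    rw [hsplit, lintegral_union measurableSet_Ioi hdisj]
    apply ENNReal.add_lt_top.2
    constructor
    · calc ∫⁻ x in Set.Ioc (0:ℝ) 1, ENNReal.ofReal (min 9 (1 / (π ^ 2 * x ^ 2)))
          ≤ ∫⁻ _y in Set.Ioc (0:ℝ) 1, (9:ℝ≥0∞) := by
            apply lintegral_mono
            intro x
            refine le_trans (ENNReal.ofReal_le_ofReal (min_le_left _ _)) ?_
            norm_num
        _ = 9 * volume (Set.Ioc (0:ℝ) 1) := setLIntegral_const _ _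
        _ < ⊤ := by
            rw [Real.volume_Ioc]
            exact ENNReal.mul_lt_top (by norm_num) ENNReal.ofReal_lt_top
    · have hint : IntegrableOn (fun t : ℝ => t ^ (-2:ℝ)) (Set.Ioi (1:ℝ)) :=
        integrableOn_Ioi_rpow_of_lt (by norm_num) one_pos
      have hptw : ∀ x ∈ Set.Ioi (1:ℝ),
          ENNReal.ofReal (min 9 (1 / (π ^ 2 * x ^ 2))) ≤ ENNReal.ofReal (x ^ (-2:ℝ)) := by
        intro x hx
        have hx1 : (1:ℝ) < x := hx
        have hx0 : (0:ℝ) < x := by linarith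
        apply ENNReal.ofReal_le_ofReal
        have hrw : x ^ (-2:ℝ) = 1 / x ^ 2 := by
          rw [show (-2:ℝ) = -((2:ℕ):ℝ) by norm_num, Real.rpow_neg hx0.le, Real.rpow_natCast,
            one_div]
        rw [hrw]
        refine le_trans (min_le_right _ _) ?_
        have hπ1 : (1:ℝ) ≤ π ^ 2 := by nlinarith [Real.pi_gt_three]
        apply one_div_le_one_div_of_le (by positivity)
        nlinarith [sq_nonneg x, mul_nonneg (by linarith : (0:ℝ) ≤ π ^ 2 - 1) (sq_nonneg x)]
      calc ∫⁻ x in Set.Ioi (1:ℝ), ENNReal.ofReal (min 9 (1 / (π ^ 2 * x ^ 2)))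
          ≤ ∫⁻ x in Set.Ioi (1:ℝ), ENNReal.ofReal (x ^ (-2:ℝ)) := by
            refine lintegral_mono_ae ?_
            exact (ae_restrict_iff' measurableSet_Ioi).2 (ae_of_all _ hptw)
        _ ≤ ∫⁻ x in Set.Ioi (1:ℝ), (‖x ^ (-2:ℝ)‖₊ : ℝ≥0∞) :=
            lintegral_ofReal_le_lintegral_enorm _
        _ < ⊤ := hint.2
  -- finiteness of the sum of lintegrals
  have hofReal_meas : ∀ i : ℕ × ℕ, AEMeasurable (fun x => ENNReal.ofReal (auxh p τ i x))
      (volume.restrict (Set.Ioi (0:ℝ))) :=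
    fun i => ((auxh_meas p τ i).ennreal_ofReal).aemeasurable
  have hfin : ∑' i : ℕ × ℕ, ∫⁻ x in Set.Ioi (0:ℝ), ENNReal.ofReal (auxh p τ i x) ≠ ⊤ := by
    rw [← MeasureTheory.lintegral_tsum hofReal_meas]
    refine ne_of_lt (lt_of_le_of_lt ?_ hmaj)
    exact lintegral_mono_ae ((ae_restrict_iff' measurableSet_Ioi).2 (ae_of_all _ hsum_pt))
  have hnn : ∀ i : ℕ × ℕ, ∫⁻ x in Set.Ioi (0:ℝ), (‖auxh p τ i x‖₊ : ℝ≥0∞)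
      = ∫⁻ x in Set.Ioi (0:ℝ), ENNReal.ofReal (auxh p τ i x) :=
    fun i => lintegral_congr fun x => Real.enorm_eq_ofReal (auxh_nonneg p τ i x)
  have hfin' : ∑' i : ℕ × ℕ, ∫⁻ x, (‖auxh p τ i x‖₊ : ℝ≥0∞) ∂(volume.restrict (Set.Ioi (0:ℝ)))
      ≠ ⊤ := by
    rw [tsum_congr hnn]
    exact hfin
  -- summability of the real integrals
  have heqi : ∀ i : ℕ × ℕ, ∫ x in Set.Ioi (0:ℝ), auxh p τ i x
      = (∫⁻ x in Set.Ioi (0:ℝ), ENNReal.ofReal (auxh p τ i x)).toReal :=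
    fun i => integral_eq_lintegral_of_nonneg_ae (ae_of_all _ (auxh_nonneg p τ i)) (hmeasi i)
  have hsummable : Summable (fun i : ℕ × ℕ => ∫ x in Set.Ioi (0:ℝ), auxh p τ i x) :=
    (summable_congr heqi).2 (ENNReal.summable_toReal hfin)
  -- the per-term evaluation
  have hterm : ∀ k j : ℕ, ∫ x in Set.Ioi (0:ℝ), auxh p τ (k, j) x
      = if k = 0 ∧ j = 0 then (0:ℝ) else
        ∫ x in ((k : ℝ) - 1 + 4 / p + j * (1 - 4 / p))..((k : ℝ) - 1 + 4 / p + j * (1 - 4 / p) + 2 / p),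
          (Set.Ioo (τ (k + j - 1)) (τ (k + j))).indicator
            (fun y => Real.sin (p / 2 * π * (y - ((k : ℝ) - 1 + j))) ^ 2 / (π ^ 2 * y ^ 2)) x := by
    intro k j
    split_ifs with hc
    · have hzero : ∀ x : ℝ, auxh p τ (k, j) x = 0 := by
        intro x
        unfold auxh
        rw [if_pos hc]
      simp only [hzero, integral_zero]
    · have hsub : auxS p τ k j ⊆ Set.Ioi (0:ℝ) := by
        intro y hy
        exact lt_of_le_of_lt (hτnonneg (k + j - 1)) hy.2.1
      have h2p : (0:ℝ) ≤ 2 / p := by positivity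
      have hAB : ((k : ℝ) - 1 + 4 / p + j * (1 - 4 / p))
          ≤ ((k : ℝ) - 1 + 4 / p + j * (1 - 4 / p) + 2 / p) := by linarith
      have hfun : (Set.Ioi (0:ℝ)).indicator (auxh p τ (k, j))
          = (auxS p τ k j).indicator
              (fun y => Real.sin (p / 2 * π * (y - ((k : ℝ) - 1 + j))) ^ 2 / (π ^ 2 * y ^ 2)) := by
        funext x
        by_cases hxS : x ∈ auxS p τ k j
        · rw [Set.indicator_of_mem (hsub hxS), Set.indicator_of_mem hxS]
          unfold auxh
          rw [if_neg hc, Set.indicator_of_mem hxS]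
        · rw [Set.indicator_of_notMem hxS]
          by_cases hx0 : x ∈ Set.Ioi (0:ℝ)
          · rw [Set.indicator_of_mem hx0]
            unfold auxh
            rw [if_neg hc, Set.indicator_of_notMem hxS]
          · rw [Set.indicator_of_notMem hx0]
      calc ∫ x in Set.Ioi (0:ℝ), auxh p τ (k, j) x
          = ∫ x, (Set.Ioi (0:ℝ)).indicator (auxh p τ (k, j)) x :=
            (integral_indicator measurableSet_Ioi).symm
        _ = ∫ x, (auxS p τ k j).indicator
              (fun y => Real.sin (p / 2 * π * (y - ((k : ℝ) - 1 + j))) ^ 2 / (π ^ 2 * y ^ 2)) x := by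
            rw [hfun]
        _ = ∫ x, (Set.Ioo (auxA p k j) (auxA p k j + 2 / p)).indicator
              ((Set.Ioo (τ (k + j - 1)) (τ (k + j))).indicator
                (fun y => Real.sin (p / 2 * π * (y - ((k : ℝ) - 1 + j))) ^ 2 / (π ^ 2 * y ^ 2))) x := by
            rw [Set.indicator_indicator]
            rfl
        _ = ∫ x in Set.Ioo (auxA p k j) (auxA p k j + 2 / p),
              (Set.Ioo (τ (k + j - 1)) (τ (k + j))).indicator
                (fun y => Real.sin (p / 2 * π * (y - ((k : ℝ) - 1 + j))) ^ 2 / (π ^ 2 * y ^ 2)) x :=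
            integral_indicator measurableSet_Ioo
        _ = ∫ x in Set.Ioc (auxA p k j) (auxA p k j + 2 / p),
              (Set.Ioo (τ (k + j - 1)) (τ (k + j))).indicator
                (fun y => Real.sin (p / 2 * π * (y - ((k : ℝ) - 1 + j))) ^ 2 / (π ^ 2 * y ^ 2)) x :=
            (integral_Ioc_eq_integral_Ioo).symm
        _ = ∫ x in (auxA p k j)..(auxA p k j + 2 / p),
              (Set.Ioo (τ (k + j - 1)) (τ (k + j))).indicator
                (fun y => Real.sin (p / 2 * π * (y - ((k : ℝ) - 1 + j))) ^ 2 / (π ^ 2 * y ^ 2)) x :=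
            (intervalIntegral.integral_of_le (by unfold auxA; linarith)).symm
        _ = ∫ x in ((k : ℝ) - 1 + 4 / p + j * (1 - 4 / p))..((k : ℝ) - 1 + 4 / p + j * (1 - 4 / p) + 2 / p),
              (Set.Ioo (τ (k + j - 1)) (τ (k + j))).indicator
                (fun y => Real.sin (p / 2 * π * (y - ((k : ℝ) - 1 + j))) ^ 2 / (π ^ 2 * y ^ 2)) x := rfl
  -- assemble
  calc Ep p τ
      = ∫ x in Set.Ioi (0:ℝ), (max 0 (Kp p τ x)) ^ 2 := rfl
    _ = ∫ x in Set.Ioi (0:ℝ), ∑' i : ℕ × ℕ, auxh p τ i x :=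
        setIntegral_congr_fun measurableSet_Ioi key
    _ = ∑' i : ℕ × ℕ, ∫ x in Set.Ioi (0:ℝ), auxh p τ i x :=
        integral_tsum hmeasi hfin'
    _ = ∑' k : ℕ, ∑' j : ℕ, ∫ x in Set.Ioi (0:ℝ), auxh p τ (k, j) x :=
        Summable.tsum_prod' hsummable hsummable.prod_factor
    _ = ∑' k : ℕ, Ap p τ k := by
        refine tsum_congr fun k => ?_
        unfold Ap
        exact tsum_congr fun j => hterm k j
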